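/- A connected bipartite graph is α⁺-stable if and only if it has an α⁺-stable spanning tree. -/

import Mathlib

set_option linter.unusedSectionVars false
set_option linter.unusedVariables false
set_option maxHeartbeats 1000000


open Finset

variable {V : Type*}

/-- A stable (independent) set of vertices of `G`. -/
def IsStableSet (G : SimpleGraph V) (S : Finset V) : Prop :=
  ∀ u ∈ S, ∀ v ∈ S, ¬ G.Adj u v

/-- The stability number `α(G)`: the maximum cardinality of a stable set. -/
noncomputable def stabNum (G : SimpleGraph V) [Fintype V] : ℕ :=
  sSup {n : ℕ | ∃ S : Finset V, IsStableSet G S ∧ S.card = n}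

/-- A stability system of `G`: a stable set of maximum cardinality. -/
def IsStabSystem (G : SimpleGraph V) [Fintype V] (S : Finset V) : Prop :=
  IsStableSet G S ∧ S.card = stabNum G

/-- `G` is α⁻-stable: deleting any edge leaves the stability number unchanged. -/
def AlphaMinusStable (G : SimpleGraph V) [Fintype V] : Prop :=
  ∀ u v : V, G.Adj u v → stabNum (G.deleteEdges {s(u, v)}) = stabNum G

/-- `G` is α⁺-stable: adding any edge of the complement leaves the stability
number unchanged. -/
def AlphaPlusStable (G : SimpleGraph V) [Fintype V] : Prop :=
  ∀ u v : V, u ≠ v → ¬ G.Adj u v →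
    stabNum (G ⊔ SimpleGraph.fromEdgeSet {s(u, v)}) = stabNum G

/-- A matching of `G`, viewed as a set of pairwise non-incident edges. -/
def IsMatchingSet (G : SimpleGraph V) (M : Finset (Sym2 V)) : Prop :=
  (↑M : Set (Sym2 V)) ⊆ G.edgeSet ∧
    ∀ e ∈ M, ∀ f ∈ M, e ≠ f → ∀ v : V, ¬ (v ∈ e ∧ v ∈ f)

/-- The matching number `μ(G)`. -/
noncomputable def matchNum (G : SimpleGraph V) [Fintype V] : ℕ :=
  sSup {n : ℕ | ∃ M : Finset (Sym2 V), IsMatchingSet G M ∧ M.card = n}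

/-- A maximum matching of `G`. -/
def IsMaximumMatching (G : SimpleGraph V) [Fintype V] (M : Finset (Sym2 V)) : Prop :=
  IsMatchingSet G M ∧ M.card = matchNum G

/-- A perfect matching of `G`: a matching covering every vertex. -/
def IsPerfectMatchingSet (G : SimpleGraph V) (M : Finset (Sym2 V)) : Prop :=
  IsMatchingSet G M ∧ ∀ v : V, ∃ e ∈ M, v ∈ e

/-- A pendant vertex: a vertex of degree one. -/
def IsPendant (G : SimpleGraph V) (v : V) : Prop :=
  (G.neighborSet v).ncard = 1

/-- A set `D` is 2-dominating: every vertex outside `D` has at least two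
neighbors in `D`. -/
def Is2Dominating (G : SimpleGraph V) (D : Finset V) : Prop :=
  ∀ v : V, v ∉ D → 2 ≤ ({u : V | u ∈ D ∧ G.Adj v u}).ncard

/-- A chordal graph: no induced cycle on four or more vertices. -/
def IsChordal (G : SimpleGraph V) : Prop :=
  ∀ n : ℕ, 4 ≤ n → IsEmpty (SimpleGraph.cycleGraph n ↪g G)

/-- A bipartite graph: the vertex set is partitioned into two stable sets. -/
def IsBipartiteGr (G : SimpleGraph V) [Fintype V] [DecidableEq V] : Prop :=
  ∃ C : Finset V, IsStableSet G C ∧ IsStableSet G Cᶜ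

/-- A strong unique independence graph: a graph with a unique stability system
whose complement is also stable. -/
def IsStrongUniqueIndep (G : SimpleGraph V) [Fintype V] [DecidableEq V] : Prop :=
  ∃ S : Finset V, IsStabSystem G S ∧ (∀ S' : Finset V, IsStabSystem G S' → S' = S) ∧
    IsStableSet G Sᶜ

/-- A bistable bipartite graph: its two color classes are its only two
stability systems. -/
def IsBistable (G : SimpleGraph V) [Fintype V] [DecidableEq V] : Prop :=
  ∃ A : Finset V, IsStableSet G A ∧ IsStableSet G Aᶜ ∧
    IsStabSystem G A ∧ IsStabSystem G Aᶜ ∧ A ≠ Aᶜ ∧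
    ∀ S : Finset V, IsStabSystem G S → S = A ∨ S = Aᶜ

/-- A vertex cover of `G`. -/
def IsVertexCover (G : SimpleGraph V) (C : Finset V) : Prop :=
  ∀ u v : V, G.Adj u v → u ∈ C ∨ v ∈ C

/-- A minimum vertex cover of `G`. -/
def IsMinVertexCover (G : SimpleGraph V) [Fintype V] (C : Finset V) : Prop :=
  IsVertexCover G C ∧ ∀ C' : Finset V, IsVertexCover G C' → C.card ≤ C'.card

section Base
variable [Fintype V] [DecidableEq V] (G : SimpleGraph V)
lemma stab_bdd : BddAbove {n : ℕ | ∃ S : Finset V, IsStableSet G S ∧ S.card = n} :=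
  ⟨Fintype.card V, by rintro n ⟨S, -, rfl⟩; exact S.card_le_univ⟩
lemma card_le_stabNum {S : Finset V} (hS : IsStableSet G S) : S.card ≤ stabNum G :=
  le_csSup (stab_bdd G) ⟨S, hS, rfl⟩
lemma stab_ne : {n : ℕ | ∃ S : Finset V, IsStableSet G S ∧ S.card = n}.Nonempty :=
  ⟨0, ∅, fun u hu => absurd hu (by simp), by simp⟩
lemma exists_stabSystem : ∃ S : Finset V, IsStableSet G S ∧ S.card = stabNum G := by
  obtain ⟨S, hS, hc⟩ := Nat.sSup_mem (stab_ne G) (stab_bdd G); exact ⟨S, hS, hc⟩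
lemma isStableSet_anti {G H : SimpleGraph V} (h : G ≤ H) {S : Finset V}
    (hS : IsStableSet H S) : IsStableSet G S :=
  fun u hu v hv hadj => hS u hu v hv (h hadj)
lemma stabNum_anti {G H : SimpleGraph V} (h : G ≤ H) : stabNum H ≤ stabNum G := by
  obtain ⟨S, hS, hc⟩ := exists_stabSystem H
  exact hc ▸ card_le_stabNum G (isStableSet_anti h hS)
lemma adj_of_mem_edge {G : SimpleGraph V} {e : Sym2 V} (he : e ∈ G.edgeSet) {u v : V}
    (hu : u ∈ e) (hv : v ∈ e) (hne : u ≠ v) : G.Adj u v := by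
  have : e = s(u, v) := (Sym2.mem_and_mem_iff hne).mp ⟨hu, hv⟩
  rwa [this, SimpleGraph.mem_edgeSet] at he
end Base

section LemmaA
variable [Fintype V] [DecidableEq V]

/-- any stable set injects into a perfect matching -/
lemma stable_card_le_pm {G : SimpleGraph V} {M : Finset (Sym2 V)}
    (hM : IsPerfectMatchingSet G M) {S : Finset V} (hS : IsStableSet G S) :
    S.card ≤ M.card := by
  classical
  have hch : ∀ v : V, ∃ e, e ∈ M ∧ v ∈ e := fun v => by
    obtain ⟨e, he, hv⟩ := hM.2 v; exact ⟨e, he, hv⟩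
  set f : V → Sym2 V := fun v => (hch v).choose with hf
  apply Finset.card_le_card_of_injOn f
  · intro v _; exact (hch v).choose_spec.1
  · intro u hu v hv heq
    by_contra hne
    have hu' : u ∈ f u := (hch u).choose_spec.2
    have hv' : v ∈ f u := heq ▸ (hch v).choose_spec.2
    have : G.Adj u v := adj_of_mem_edge (hM.1.1 (hch u).choose_spec.1) hu' hv' hne
    exact hS u hu v hv this

/-- each color class has the same size as a perfect matching -/
lemma pm_card_le_class {G : SimpleGraph V} {M : Finset (Sym2 V)}
    (hM : IsPerfectMatchingSet G M) {A : Finset V} (hA : IsStableSet G A)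
    (hAc : IsStableSet G Aᶜ) : M.card ≤ A.card := by
  classical
  have hch : ∀ e ∈ M, ∃ a, a ∈ A ∧ a ∈ e := by
    intro e he
    induction e with
    | h x y =>
      have hadj : G.Adj x y := by
        have := hM.1.1 he; rwa [SimpleGraph.mem_edgeSet] at this
      by_cases hx : x ∈ A
      · exact ⟨x, hx, by simp⟩
      · have hxc : x ∈ Aᶜ := by simpa using hx
        by_cases hy : y ∈ A
        · exact ⟨y, hy, by simp⟩
        · exact absurd (hAc x hxc y (by simpa using hy)) (fun h => h hadj)
  cases isEmpty_or_nonempty V with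
  | inl hV =>
    have : M = ∅ := by
      ext e
      simp only [Finset.notMem_empty, iff_false]
      intro he
      obtain ⟨a, -, -⟩ := hch e he
      exact hV.elim a
    simp [this]
  | inr hV =>
    set g : Sym2 V → V := fun e =>
      if h : ∃ a, a ∈ A ∧ a ∈ e then h.choose else Classical.arbitrary _ with hg
    apply Finset.card_le_card_of_injOn g
    · intro e he
      have h := hch e he
      simp only [hg, dif_pos h]
      exact h.choose_spec.1
    · intro e he f hf heq
      have h1 := hch e he
      have h2 := hch f hf
      by_contra hne
      have he1 : g e ∈ e := by simp only [hg, dif_pos h1]; exact h1.choose_spec.2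
      have hf1 : g f ∈ f := by simp only [hg, dif_pos h2]; exact h2.choose_spec.2
      exact hM.1.2 e he f hf hne (g e) ⟨he1, heq ▸ hf1⟩

lemma bip_pm_alphaPlus {G : SimpleGraph V} {A : Finset V} (hA : IsStableSet G A)
    (hAc : IsStableSet G Aᶜ) {M : Finset (Sym2 V)} (hM : IsPerfectMatchingSet G M) :
    AlphaPlusStable G := by
  classical
  have hAcard : A.card = M.card :=
    le_antisymm (stable_card_le_pm hM hA) (pm_card_le_class hM hA hAc)
  have hAccard : Aᶜ.card = M.card := by
    refine le_antisymm (stable_card_le_pm hM hAc) ?_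
    have := pm_card_le_class hM hAc (by simpa using hA)
    simpa using this
  have hstab : stabNum G = M.card := by
    apply le_antisymm
    · obtain ⟨S, hS, hc⟩ := exists_stabSystem G
      exact hc ▸ stable_card_le_pm hM hS
    · exact hAcard ▸ card_le_stabNum G hA
  intro u v hne hnadj
  refine le_antisymm (stabNum_anti le_sup_left) ?_
  -- pick W ∈ {A, Aᶜ} avoiding {u,v} ⊆ W
  have key : ∃ W : Finset V, IsStableSet G W ∧ W.card = stabNum G ∧ ¬(u ∈ W ∧ v ∈ W) := by
    by_cases hu : u ∈ A
    · by_cases hv : v ∈ A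
      · exact ⟨Aᶜ, hAc, by rw [hAccard, hstab], fun h => (Finset.mem_compl.mp h.1) hu⟩
      · exact ⟨A, hA, by rw [hAcard, hstab], fun h => hv h.2⟩
    · exact ⟨A, hA, by rw [hAcard, hstab], fun h => hu h.1⟩
  obtain ⟨W, hW, hWc, hWuv⟩ := key
  have hWstable : IsStableSet (G ⊔ SimpleGraph.fromEdgeSet {s(u, v)}) W := by
    intro a ha b hb hadj
    cases hadj with
    | inl h => exact hW a ha b hb h
    | inr h =>
      rw [SimpleGraph.fromEdgeSet_adj] at h
      obtain ⟨h1, -⟩ := h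
      simp only [Set.mem_singleton_iff, Sym2.eq_iff] at h1
      rcases h1 with ⟨rfl, rfl⟩ | ⟨rfl, rfl⟩
      · exact hWuv ⟨ha, hb⟩
      · exact hWuv ⟨hb, ha⟩
  calc stabNum G = W.card := hWc.symm
    _ ≤ stabNum (G ⊔ SimpleGraph.fromEdgeSet {s(u, v)}) := card_le_stabNum _ hWstable

end LemmaA

section Koenig
variable [Fintype V] [DecidableEq V]

lemma match_bdd (G : SimpleGraph V) :
    BddAbove {n : ℕ | ∃ M : Finset (Sym2 V), IsMatchingSet G M ∧ M.card = n} :=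
  ⟨Fintype.card (Sym2 V), by rintro n ⟨M, -, rfl⟩; exact M.card_le_univ⟩

lemma match_ne (G : SimpleGraph V) :
    {n : ℕ | ∃ M : Finset (Sym2 V), IsMatchingSet G M ∧ M.card = n}.Nonempty :=
  ⟨0, ∅, ⟨by simp, fun e he => absurd he (by simp)⟩, by simp⟩

lemma exists_maxMatching (G : SimpleGraph V) :
    ∃ M : Finset (Sym2 V), IsMatchingSet G M ∧ M.card = matchNum G := by
  obtain ⟨M, hM, hc⟩ := Nat.sSup_mem (match_ne G) (match_bdd G); exact ⟨M, hM, hc⟩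

lemma card_le_matchNum (G : SimpleGraph V) {M : Finset (Sym2 V)} (hM : IsMatchingSet G M) :
    M.card ≤ matchNum G :=
  le_csSup (match_bdd G) ⟨M, hM, rfl⟩

lemma koenig {G : SimpleGraph V} {A : Finset V} (hA : IsStableSet G A)
    (hAc : IsStableSet G Aᶜ) : Fintype.card V ≤ stabNum G + matchNum G := by
  classical
  set N : V → Finset V := fun a => Aᶜ.filter (fun b => G.Adj a b) with hN
  obtain ⟨S0, hS0pow, hS0max⟩ :=
    A.powerset.exists_max_image (fun S => S.card + (Aᶜ \ S.biUnion N).card) ⟨∅, by simp⟩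
  have hS0A : S0 ⊆ A := Finset.mem_powerset.mp hS0pow
  set m : ℕ := S0.card + (Aᶜ \ S0.biUnion N).card with hm
  -- Step 0: m ≥ Aᶜ.card
  have hmge : Aᶜ.card ≤ m := by
    have := hS0max ∅ (Finset.mem_powerset.mpr (Finset.empty_subset A))
    simpa using this
  set k : ℕ := m - Aᶜ.card with hk
  have hmk : m = Aᶜ.card + k := by omega
  -- Step 1 : stabNum G ≥ m
  have hstab : m ≤ stabNum G := by
    have hdisj : Disjoint S0 (Aᶜ \ S0.biUnion N) := by
      refine Finset.disjoint_left.mpr fun x hx hx' => ?_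
      exact (Finset.mem_compl.mp (Finset.mem_sdiff.mp hx').1) (hS0A hx)
    have hstable : IsStableSet G (S0 ∪ (Aᶜ \ S0.biUnion N)) := by
      intro x hx y hy hadj
      rcases Finset.mem_union.mp hx with hx1 | hx2
      · rcases Finset.mem_union.mp hy with hy1 | hy2
        · exact hA x (hS0A hx1) y (hS0A hy1) hadj
        · obtain ⟨hyc, hynb⟩ := Finset.mem_sdiff.mp hy2
          exact hynb (Finset.mem_biUnion.mpr ⟨x, hx1, Finset.mem_filter.mpr ⟨hyc, hadj⟩⟩)
      · rcases Finset.mem_union.mp hy with hy1 | hy2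
        · obtain ⟨hxc, hxnb⟩ := Finset.mem_sdiff.mp hx2
          exact hxnb (Finset.mem_biUnion.mpr ⟨y, hy1, Finset.mem_filter.mpr ⟨hxc, hadj.symm⟩⟩)
        · exact hAc x (Finset.mem_sdiff.mp hx2).1 y (Finset.mem_sdiff.mp hy2).1 hadj
    have := card_le_stabNum G hstable
    rwa [Finset.card_union_of_disjoint hdisj] at this
  -- Step 2 : matchNum G + k ≥ A.card  (defect Hall)
  have hmatch : A.card ≤ matchNum G + k := by
    set ι := {a : V // a ∈ A}
    set t : ι → Finset (V ⊕ Fin k) := fun a =>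
      (N a.1).image Sum.inl ∪ (Finset.univ : Finset (Fin k)).image Sum.inr with ht
    have hall : ∀ s : Finset ι, s.card ≤ (s.biUnion t).card := by
      intro s
      rcases s.eq_empty_or_nonempty with rfl | hs
      · simp
      set S : Finset V := s.image Subtype.val with hS
      have hScard : S.card = s.card := Finset.card_image_of_injective _ Subtype.val_injective
      have hSA : S ⊆ A := by
        intro x hx; obtain ⟨a, -, rfl⟩ := Finset.mem_image.mp hx; exact a.2
      have hXsub : S.biUnion N ⊆ Aᶜ := by
        intro b hb
        obtain ⟨a, -, hb'⟩ := Finset.mem_biUnion.mp hb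
        exact (Finset.mem_filter.mp hb').1
      have hmax := hS0max S (Finset.mem_powerset.mpr hSA)
      have hsd : (Aᶜ \ S.biUnion N).card = Aᶜ.card - (S.biUnion N).card :=
        Finset.card_sdiff_of_subset hXsub
      have hle' : (S.biUnion N).card ≤ Aᶜ.card := Finset.card_le_card hXsub
      have hhall : S.card ≤ (S.biUnion N).card + k := by
        simp only [hsd] at hmax; omega
      -- the biUnion contains the inl-image of S.biUnion N and all the inr dummies
      have hsub : ((S.biUnion N).image Sum.inl ∪
          (Finset.univ : Finset (Fin k)).image Sum.inr) ⊆ s.biUnion t := by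
        intro x hx
        rcases Finset.mem_union.mp hx with hx1 | hx2
        · obtain ⟨b, hb, rfl⟩ := Finset.mem_image.mp hx1
          obtain ⟨a', ha', hb'⟩ := Finset.mem_biUnion.mp hb
          obtain ⟨a, ha, rfl⟩ := Finset.mem_image.mp ha'
          exact Finset.mem_biUnion.mpr ⟨a, ha,
            Finset.mem_union_left _ (Finset.mem_image.mpr ⟨b, hb', rfl⟩)⟩
        · obtain ⟨j, -, rfl⟩ := Finset.mem_image.mp hx2
          obtain ⟨a, ha⟩ := hs
          exact Finset.mem_biUnion.mpr ⟨a, ha,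
            Finset.mem_union_right _ (Finset.mem_image.mpr ⟨j, Finset.mem_univ j, rfl⟩)⟩
      have hdisj2 : Disjoint ((S.biUnion N).image (Sum.inl : V → V ⊕ Fin k))
          ((Finset.univ : Finset (Fin k)).image Sum.inr) := by
        refine Finset.disjoint_left.mpr fun x hx1 hx2 => ?_
        obtain ⟨b, -, rfl⟩ := Finset.mem_image.mp hx1
        obtain ⟨j, -, hj⟩ := Finset.mem_image.mp hx2
        cases hj
      have hcard2 : ((S.biUnion N).image (Sum.inl : V → V ⊕ Fin k) ∪
          (Finset.univ : Finset (Fin k)).image Sum.inr).card = (S.biUnion N).card + k := by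
        rw [Finset.card_union_of_disjoint hdisj2,
          Finset.card_image_of_injective _ Sum.inl_injective,
          Finset.card_image_of_injective _ Sum.inr_injective, Finset.card_univ, Fintype.card_fin]
      calc s.card = S.card := hScard.symm
        _ ≤ (S.biUnion N).card + k := hhall
        _ = _ := hcard2.symm
        _ ≤ (s.biUnion t).card := Finset.card_le_card hsub
    obtain ⟨f, hfinj, hft⟩ := (Finset.all_card_le_biUnion_card_iff_exists_injective t).mp hall
    set P : Finset ι := Finset.univ.filter (fun a => (f a).isLeft) with hP
    set Q : Finset ι := Finset.univ.filter (fun a => ¬(f a).isLeft) with hQ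
    set theB : ι → V := fun a => Sum.elim id (fun _ => a.1) (f a) with htheB
    have hPb : ∀ a ∈ P, theB a ∈ N a.1 ∧ f a = Sum.inl (theB a) := by
      intro a ha
      have hl : (f a).isLeft := (Finset.mem_filter.mp ha).2
      rcases Finset.mem_union.mp (hft a) with h1 | h2
      · obtain ⟨b, hb, hfb⟩ := Finset.mem_image.mp h1
        refine ⟨?_, ?_⟩ <;> simp [htheB, ← hfb, hb]
      · obtain ⟨j, -, hfj⟩ := Finset.mem_image.mp h2
        rw [← hfj] at hl; simp at hl
    have hBcompl : ∀ a ∈ P, theB a ∈ Aᶜ := fun a ha =>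
      (Finset.mem_filter.mp (hPb a ha).1).1
    have hBadj : ∀ a ∈ P, G.Adj a.1 (theB a) := fun a ha =>
      (Finset.mem_filter.mp (hPb a ha).1).2
    set M : Finset (Sym2 V) := P.image (fun a => s(a.1, theB a)) with hM
    have hMcard : M.card = P.card := by
      apply Finset.card_image_of_injOn
      intro a ha a' ha' heq
      rw [Sym2.eq_iff] at heq
      rcases heq with ⟨h1, -⟩ | ⟨h1, h2⟩
      · exact Subtype.ext h1
      · exact absurd a.2 (h1 ▸ Finset.mem_compl.mp (hBcompl a' ha'))
    have hMmatch : IsMatchingSet G M := by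
      constructor
      · intro e he
        obtain ⟨a, ha, rfl⟩ := Finset.mem_image.mp he
        exact (SimpleGraph.mem_edgeSet G).mpr (hBadj a ha)
      · intro e he e' he' hne v hv
        obtain ⟨a, ha, rfl⟩ := Finset.mem_image.mp he
        obtain ⟨a', ha', rfl⟩ := Finset.mem_image.mp he'
        have hv1 := hv.1; have hv2 := hv.2
        rw [Sym2.mem_iff] at hv1 hv2
        have haa : a ≠ a' := fun h => hne (by rw [h])
        rcases hv1 with rfl | rfl
        · rcases hv2 with h | h
          · exact haa (Subtype.ext h)
          · exact (Finset.mem_compl.mp (h ▸ hBcompl a' ha')) a.2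
        · rcases hv2 with h | h
          · exact (Finset.mem_compl.mp (hBcompl a ha)) (h ▸ a'.2)
          · have : f a = f a' := by
              rw [(hPb a ha).2, (hPb a' ha').2, h]
            exact haa (hfinj this)
    have hQk : Q.card ≤ k := by
      have : Q.card ≤ ((Finset.univ : Finset (Fin k)).image (Sum.inr : Fin k → V ⊕ Fin k)).card := by
        apply Finset.card_le_card_of_injOn f
        · intro a ha
          have hr : ¬(f a).isLeft := (Finset.mem_filter.mp ha).2
          rcases Finset.mem_union.mp (hft a) with h1 | h2
          · obtain ⟨b, -, hfb⟩ := Finset.mem_image.mp h1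
            rw [← hfb] at hr; simp at hr
          · exact h2
        · exact fun a _ a' _ h => hfinj h
      rwa [Finset.card_image_of_injective _ Sum.inr_injective, Finset.card_univ,
        Fintype.card_fin] at this
    have hPQ : P.card + Q.card = A.card := by
      rw [Finset.card_filter_add_card_filter_not, Finset.card_univ, Fintype.card_coe]
    have := card_le_matchNum G hMmatch
    omega
  have hcardV : Fintype.card V = A.card + Aᶜ.card := by
    rw [Finset.card_add_card_compl]
  omega

end Koenig

section LemmaB
variable [Fintype V] [DecidableEq V]

lemma core_mem {G : SimpleGraph V} {A : Finset V} (hA : IsStableSet G A)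
    (hAc : IsStableSet G Aᶜ) {M : Finset (Sym2 V)} (hM : IsMatchingSet G M)
    (hMmax : M.card = matchNum G) {w : V} (hw : ¬∃ e ∈ M, w ∈ e)
    {S : Finset V} (hS : IsStableSet G S) (hScard : S.card = stabNum G) : w ∈ S := by
  classical
  by_contra hws
  have hch : ∀ e ∈ M, ∃ z, z ∈ e ∧ z ∈ Sᶜ := by
    intro e he
    induction e with
    | h x y =>
      have hadj : G.Adj x y := by
        have := hM.1 he; rwa [SimpleGraph.mem_edgeSet] at this
      by_cases hx : x ∈ S
      · by_cases hy : y ∈ S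
        · exact absurd hadj (hS x hx y hy)
        · exact ⟨y, by simp, Finset.mem_compl.mpr hy⟩
      · exact ⟨x, by simp, Finset.mem_compl.mpr hx⟩
  cases isEmpty_or_nonempty V with
  | inl hV =>
    exact hV.elim w
  | inr hV =>
    set c : Sym2 V → V := fun e =>
      if h : ∃ z, z ∈ e ∧ z ∈ Sᶜ then h.choose else Classical.arbitrary _ with hc
    have hinj : M.card ≤ (Sᶜ.erase w).card := by
      apply Finset.card_le_card_of_injOn c
      · intro e he
        have h := hch e he
        have h1 : c e ∈ e := by simp only [hc, dif_pos h]; exact h.choose_spec.1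
        have h2 : c e ∈ Sᶜ := by simp only [hc, dif_pos h]; exact h.choose_spec.2
        refine Finset.mem_erase.mpr ⟨?_, h2⟩
        rintro rfl
        exact hw ⟨e, he, h1⟩
      · intro e he f hf heq
        by_contra hne
        have h1 : c e ∈ e := by
          have h := hch e he; simp only [hc, dif_pos h]; exact h.choose_spec.1
        have h2 : c f ∈ f := by
          have h := hch f hf; simp only [hc, dif_pos h]; exact h.choose_spec.1
        exact hM.2 e he f hf hne (c e) ⟨h1, heq ▸ h2⟩
    have hwc : w ∈ Sᶜ := Finset.mem_compl.mpr hws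
    have hcount : matchNum G + 1 ≤ Sᶜ.card := by
      have := Finset.card_erase_of_mem hwc
      have hpos : 1 ≤ Sᶜ.card := Finset.card_pos.mpr ⟨w, hwc⟩
      omega
    have hKV := koenig hA hAc
    have hcardV : Fintype.card V = S.card + Sᶜ.card := (Finset.card_add_card_compl S).symm
    omega

lemma exists_adj_of_connected {G : SimpleGraph V} (hc : G.Connected)
    (h2 : 1 < Fintype.card V) (u : V) : ∃ w, G.Adj u w := by
  obtain ⟨v, hv⟩ := Fintype.exists_ne_of_one_lt_card h2 u
  obtain ⟨p⟩ := hc.preconnected u v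
  cases p with
  | nil => exact absurd rfl hv.symm
  | cons h q => exact ⟨_, h⟩

lemma exists_pm_of_alphaPlus {G : SimpleGraph V} (hc : G.Connected)
    (h2 : 1 < Fintype.card V) {A : Finset V} (hA : IsStableSet G A)
    (hAc : IsStableSet G Aᶜ) (hap : AlphaPlusStable G) :
    ∃ M : Finset (Sym2 V), IsPerfectMatchingSet G M := by
  classical
  obtain ⟨M, hM, hMmax⟩ := exists_maxMatching G
  by_cases hperf : ∀ v : V, ∃ e ∈ M, v ∈ e
  · exact ⟨M, hM, hperf⟩
  push_neg at hperf
  obtain ⟨u, hu⟩ := hperf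
  have hu' : ¬∃ e ∈ M, u ∈ e := by push_neg; exact hu
  -- find two vertices u ≠ x, each exposed by some maximum matching
  have hkey : ∃ (x : V) (M' : Finset (Sym2 V)), x ≠ u ∧ IsMatchingSet G M' ∧
      M'.card = matchNum G ∧ ¬∃ e ∈ M', x ∈ e := by
    by_cases hex : ∃ v, v ≠ u ∧ ¬∃ e ∈ M, v ∈ e
    · obtain ⟨v, hvu, hv⟩ := hex
      exact ⟨v, M, hvu, hM, hMmax, hv⟩
    push_neg at hex
    -- all vertices except u are saturated by M; swap along a neighbor of u
    obtain ⟨w, hw⟩ := exists_adj_of_connected hc h2 u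
    have huw : u ≠ w := hw.ne
    obtain ⟨e, he, hwe⟩ := hex w huw.symm
    set x : V := (Sym2.Mem.other hwe) with hx
    have hespec : s(w, x) = e := Sym2.other_spec hwe
    have hadjwx : G.Adj w x := by
      have := hM.1 he
      rw [← hespec, SimpleGraph.mem_edgeSet] at this
      exact this
    have hxu : x ≠ u := by
      rintro rfl
      exact hu e he (by rw [← hespec]; simp)
    have hwx : w ≠ x := hadjwx.ne
    set M' : Finset (Sym2 V) := insert s(u, w) (M.erase e) with hM'
    have hsuw_notM : s(u, w) ∉ M := by
      intro h
      exact hu _ h (by simp)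
    have hM'match : IsMatchingSet G M' := by
      constructor
      · intro f hf
        rcases Finset.mem_insert.mp hf with rfl | hf'
        · exact (SimpleGraph.mem_edgeSet G).mpr hw
        · exact hM.1 (Finset.mem_erase.mp hf').2
      · intro f hf g hg hfg v hv
        rcases Finset.mem_insert.mp hf with rfl | hf'
        · rcases Finset.mem_insert.mp hg with rfl | hg'
          · exact hfg rfl
          · -- v ∈ s(u,w) and v ∈ g ∈ M.erase e
            obtain ⟨hgne, hgM⟩ := Finset.mem_erase.mp hg'
            have hv1 := hv.1
            rw [Sym2.mem_iff] at hv1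
            rcases hv1 with rfl | rfl
            · exact hu g hgM hv.2
            · -- v = w ∈ g, but w ∈ e, g ≠ e
              refine hgne (?_ : g = e)
              by_contra hne2
              exact hM.2 g hgM e he hne2 v ⟨hv.2, hespec ▸ (by simp)⟩
        · rcases Finset.mem_insert.mp hg with rfl | hg'
          · obtain ⟨hfne, hfM⟩ := Finset.mem_erase.mp hf'
            have hv2 := hv.2
            rw [Sym2.mem_iff] at hv2
            rcases hv2 with rfl | rfl
            · exact hu f hfM hv.1
            · refine hfne (?_ : f = e)
              by_contra hne2
              exact hM.2 f hfM e he hne2 v ⟨hv.1, hespec ▸ (by simp)⟩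
          · exact hM.2 f (Finset.mem_erase.mp hf').2 g (Finset.mem_erase.mp hg').2 hfg v hv
    have hM'card : M'.card = matchNum G := by
      rw [hM', Finset.card_insert_of_notMem (fun h => hsuw_notM (Finset.mem_erase.mp h).2),
        Finset.card_erase_of_mem he]
      have hpos : 1 ≤ M.card := Finset.card_pos.mpr ⟨e, he⟩
      omega
    have hxexp : ¬∃ f ∈ M', x ∈ f := by
      rintro ⟨f, hf, hxf⟩
      rcases Finset.mem_insert.mp hf with rfl | hf'
      · rw [Sym2.mem_iff] at hxf
        rcases hxf with h | h
        · exact hxu h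
        · exact hwx h.symm
      · obtain ⟨hfne, hfM⟩ := Finset.mem_erase.mp hf'
        refine hfne (?_ : f = e)
        by_contra hne2
        exact hM.2 f hfM e he hne2 x ⟨hxf, hespec ▸ (by simp)⟩
    exact ⟨x, M', hxu, hM'match, hM'card, hxexp⟩
  obtain ⟨x, M', hxu, hM'm, hM'c, hxexp⟩ := hkey
  -- both u and x belong to every stability system
  obtain ⟨S, hS, hScard⟩ := exists_stabSystem G
  have huS : u ∈ S := core_mem hA hAc hM hMmax hu' hS hScard
  have hxS : x ∈ S := core_mem hA hAc hM'm hM'c hxexp hS hScard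
  have hnadj : ¬G.Adj u x := hS u huS x hxS
  have hne : u ≠ x := fun h => hxu h.symm
  -- add the edge ux : stability number unchanged, contradiction
  have hadd := hap u x hne hnadj
  obtain ⟨S', hS', hS'card⟩ := exists_stabSystem (G ⊔ SimpleGraph.fromEdgeSet {s(u, x)})
  have hS'G : IsStableSet G S' := isStableSet_anti le_sup_left hS'
  have hS'Gcard : S'.card = stabNum G := by rw [hS'card, hadd]
  have huS' : u ∈ S' := core_mem hA hAc hM hMmax hu' hS'G hS'Gcard
  have hxS' : x ∈ S' := core_mem hA hAc hM'm hM'c hxexp hS'G hS'Gcard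
  have : (G ⊔ SimpleGraph.fromEdgeSet {s(u, x)}).Adj u x :=
    Or.inr (by rw [SimpleGraph.fromEdgeSet_adj]; exact ⟨by simp, hne⟩)
  exact absurd this (hS' u huS' x hxS')

end LemmaB

section SpanningTree
variable [Fintype V] [DecidableEq V]

open SimpleGraph

lemma delete_edge_connected {H : SimpleGraph V} (hconn : H.Connected) {a b : V}
    (hr : (H \ fromEdgeSet {s(a, b)}).Reachable a b) :
    (H \ fromEdgeSet {s(a, b)}).Connected := by
  have hne : Nonempty V := hconn.nonempty
  rw [SimpleGraph.connected_iff]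
  refine ⟨fun x y => ?_, hne⟩
  obtain ⟨p⟩ := hconn.preconnected x y
  induction p with
  | nil => rfl
  | @cons x z y hadj q ih =>
    by_cases hcase : s(x, z) = s(a, b)
    · rw [Sym2.eq_iff] at hcase
      have hxz : (H \ fromEdgeSet {s(a, b)}).Reachable x z := by
        rcases hcase with ⟨rfl, rfl⟩ | ⟨rfl, rfl⟩
        · exact hr
        · exact hr.symm
      exact hxz.trans ih
    · have hadj' : (H \ fromEdgeSet {s(a, b)}).Adj x z := by
        rw [sdiff_adj]
        exact ⟨hadj, fun h => hcase ((fromEdgeSet_adj _).mp h).1⟩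
      exact hadj'.reachable.trans ih

lemma delete_cycle_edge_connected {H : SimpleGraph V} (hconn : H.Connected) :
    ∀ e : Sym2 V, (∃ (v : V) (c : H.Walk v v), c.IsCycle ∧ e ∈ c.edges) →
      (H \ fromEdgeSet {e}).Connected := by
  intro e
  induction e with
  | h a b =>
    rintro ⟨v, c, hc, he⟩
    have hadj : H.Adj a b := c.adj_of_mem_edges he
    have hr : (H \ fromEdgeSet {s(a, b)}).Reachable a b :=
      (adj_and_reachable_delete_edges_iff_exists_cycle.mpr ⟨v, c, hc, he⟩).2
    exact delete_edge_connected hconn hr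

lemma exists_spanning_tree_superset {G : SimpleGraph V} (hc : G.Connected)
    {M : Finset (Sym2 V)} (hM : IsMatchingSet G M) :
    ∃ T : SimpleGraph V, T ≤ G ∧ T.IsTree ∧ ↑M ⊆ T.edgeSet := by
  classical
  set S : Set (SimpleGraph V) :=
    {H | H ≤ G ∧ H.Connected ∧ ↑M ⊆ H.edgeSet} with hSdef
  have hGS : G ∈ S := ⟨le_refl G, hc, hM.1⟩
  set vals : Set ℕ := (fun H : SimpleGraph V => H.edgeSet.ncard) '' S with hvals
  have hvne : vals.Nonempty := ⟨G.edgeSet.ncard, G, hGS, rfl⟩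
  obtain ⟨H, hHS, hHn⟩ := Nat.sInf_mem hvne
  have hmin : ∀ H' ∈ S, H.edgeSet.ncard ≤ H'.edgeSet.ncard := by
    intro H' hH'
    have : H.edgeSet.ncard = sInf vals := hHn
    rw [this]
    exact Nat.sInf_le ⟨H', hH', rfl⟩
  obtain ⟨hHG, hHconn, hHM⟩ := hHS
  refine ⟨H, hHG, ⟨hHconn, ?_⟩, hHM⟩
  -- acyclicity by minimality
  by_contra hcyc
  unfold SimpleGraph.IsAcyclic at hcyc
  push_neg at hcyc
  obtain ⟨v, c, hcycle⟩ := hcyc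
  -- find an edge of the cycle not in M
  have hedge : ∃ e ∈ c.edges, e ∉ M := by
    by_contra hall
    push_neg at hall
    have h3 := hcycle.three_le_length
    cases c with
    | nil => simp at h3
    | @cons _ b _ hadj q =>
      cases q with
      | nil => simp at h3
      | @cons _ b2 _ hadj2 q' =>
        have hnodup : (SimpleGraph.Walk.cons hadj (SimpleGraph.Walk.cons hadj2 q')).edges.Nodup :=
          hcycle.edges_nodup
        simp only [SimpleGraph.Walk.edges_cons, List.nodup_cons, List.mem_cons] at hnodup
        have hne12 : s(v, b) ≠ s(b, b2) := fun h => hnodup.1 (Or.inl h)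
        have he1 : s(v, b) ∈ M := hall _ (by simp)
        have he2 : s(b, b2) ∈ M := hall _ (by simp)
        exact hM.2 _ he1 _ he2 hne12 b ⟨by simp, by simp⟩
  obtain ⟨e, hec, heM⟩ := hedge
  set H' : SimpleGraph V := H \ SimpleGraph.fromEdgeSet {e} with hH'
  have heH : e ∈ H.edgeSet := c.edges_subset_edgeSet hec
  have hH'edge : H'.edgeSet = H.edgeSet \ {e} := by
    rw [hH', SimpleGraph.edgeSet_sdiff, SimpleGraph.edgeSet_fromEdgeSet,
      SimpleGraph.edgeSet_sdiff_sdiff_isDiag]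
  have hH'S : H' ∈ S := by
    refine ⟨le_trans sdiff_le hHG, ?_, ?_⟩
    · exact delete_cycle_edge_connected hHconn e ⟨v, c, hcycle, hec⟩
    · intro f hf
      rw [hH'edge]
      exact ⟨hHM hf, fun h => heM (h ▸ hf)⟩
  have hlt : H'.edgeSet.ncard < H.edgeSet.ncard := by
    rw [hH'edge]
    exact Set.ncard_diff_singleton_lt_of_mem heH (Set.toFinite _)
  exact absurd (hmin H' hH'S) (by omega)

end SpanningTree

/-- A connected bipartite graph is α⁺-stable if and only if it
has an α⁺-stable spanning tree. -/
theorem stmt11 {V : Type*} [Fintype V] [DecidableEq V] (G : SimpleGraph V)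
    (hc : G.Connected) (hbip : IsBipartiteGr G) :
    AlphaPlusStable G ↔
      ∃ T : SimpleGraph V, T ≤ G ∧ T.IsTree ∧ AlphaPlusStable T := by
  classical
  obtain ⟨A, hA, hAc⟩ := hbip
  by_cases h2 : 1 < Fintype.card V
  · constructor
    · intro hap
      obtain ⟨M, hMpm⟩ := exists_pm_of_alphaPlus hc h2 hA hAc hap
      obtain ⟨T, hTG, hTtree, hTM⟩ := exists_spanning_tree_superset hc hMpm.1
      have hMT : IsPerfectMatchingSet T M := ⟨⟨hTM, hMpm.1.2⟩, hMpm.2⟩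
      exact ⟨T, hTG, hTtree,
        bip_pm_alphaPlus (isStableSet_anti hTG hA) (isStableSet_anti hTG hAc) hMT⟩
    · rintro ⟨T, hTG, hTtree, hapT⟩
      obtain ⟨M, hMpm⟩ := exists_pm_of_alphaPlus hTtree.isConnected h2
        (isStableSet_anti hTG hA) (isStableSet_anti hTG hAc) hapT
      have hMG : IsPerfectMatchingSet G M :=
        ⟨⟨Set.Subset.trans hMpm.1.1 (SimpleGraph.edgeSet_mono hTG), hMpm.1.2⟩, hMpm.2⟩
      exact bip_pm_alphaPlus hA hAc hMG
  · -- degenerate case: at most one vertex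
    push_neg at h2
    have hsub : Subsingleton V := Fintype.card_le_one_iff_subsingleton.mp h2
    have hap : AlphaPlusStable G := fun u v hne _ => absurd (Subsingleton.elim u v) hne
    have hacyc : G.IsAcyclic := by
      intro v c hcy
      cases c with
      | nil => simp at hcy
      | cons hadj q => exact absurd (Subsingleton.elim _ _) (G.ne_of_adj hadj)
    exact ⟨fun _ => ⟨G, le_refl G, ⟨hc, hacyc⟩, hap⟩, fun _ => hap⟩
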